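/- If CED(Ω, Obs) ≠ ∅ and for each counter-example ce in a chosen nonempty subset S a discrepancy δ_ce is selected, then the distribution Ω' = Ω ∪ {δ_ce | ce ∈ S} satisfies Ω ≼ Ω' strictly (Ω' ⋠ Ω), and no counter-example of S remains in CED(Ω', Obs). -/

import Mathlib

open Classical in
/-- Projection of a trace onto a sub-alphabet. -/
noncomputable def proj {A : Type*} (s : Set A) : List A → List A
  | [] => []
  | a :: σ => if a ∈ s then a :: proj s σ else proj s σ

/-- A distribution of the alphabet `A`: a family of sub-alphabets covering `A`. -/
def TraceDistribution {A : Type*} (Ω : Set (Set A)) : Prop := ⋃₀ Ω = Set.univ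

/-- A language agrees with an observation function (`L ⊨ Obs`). -/
def Agrees {A : Type*} (L : Set (List A)) (Obs : List A → Option Bool) : Prop :=
  ∀ σ b, Obs σ = some b → (σ ∈ L ↔ b = true)

/-- `L` is a product language over the distribution `Ω`: it is the parallel
composition of a family of languages over the component alphabets. -/
def ProductLang {A : Type*} (Ω : Set (Set A)) (L : Set (List A)) : Prop :=
  ∃ Ls : Set A → Set (List A),
    (∀ s ∈ Ω, ∀ σ ∈ Ls s, ∀ a ∈ σ, a ∈ s) ∧
    L = {σ | ∀ s ∈ Ω, proj s σ ∈ Ls s}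

/-- `Ω ⊨ Obs`: some product language over `Ω` agrees with `Obs`. -/
def Models {A : Type*} (Ω : Set (Set A)) (Obs : List A → Option Bool) : Prop :=
  ∃ L, ProductLang Ω L ∧ Agrees L Obs

/-- A counter-example to `Ω ⊨ Obs`: a negative observation `σN` together with,
for each component alphabet, a positive observation with matching projection. -/
def IsCED {A : Type*} (Ω : Set (Set A)) (Obs : List A → Option Bool)
    (σN : List A) (P : Set A → List A) : Prop :=
  Obs σN = some false ∧
  ∀ s ∈ Ω, Obs (P s) = some true ∧ proj s σN = proj s (P s)

/-- The connectivity preorder: `Ω` is less connecting than `Ω'`. -/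
def lessConn {A : Type*} (Ω Ω' : Set (Set A)) : Prop :=
  ∀ s ∈ Ω, ∃ t ∈ Ω', s ⊆ t

/-- Multiplicity discrepancies: symbols occurring a different number of times. -/
def MultDisc {A : Type*} [DecidableEq A] (x y : List A) : Set A :=
  {a | x.count a ≠ y.count a}

/-- Order discrepancy: a pair of distinct symbols, each with equal multiplicity in
both traces, whose relative order differs between the two traces. -/
def OrdDisc {A : Type*} [DecidableEq A] (x y : List A) (a b : A) : Prop :=
  a ≠ b ∧ x.count a = y.count a ∧ x.count b = y.count b ∧
    proj {a, b} x ≠ proj {a, b} y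

/-- `δ` is a discrepancy for the counter-example `(σN, P)`: for every component
alphabet it contains a multiplicity discrepancy or an order-discrepancy pair. -/
def IsDisc {A : Type*} [DecidableEq A] (Ω : Set (Set A)) (σN : List A)
    (P : Set A → List A) (δ : Set A) : Prop :=
  ∀ s ∈ Ω, (∃ a ∈ δ, a ∈ MultDisc σN (P s)) ∨
    (∃ a b, a ∈ δ ∧ b ∈ δ ∧ OrdDisc σN (P s) a b)

theorem count_proj {A : Type*} [DecidableEq A] (s : Set A) (a : A) (ha : a ∈ s) :
    ∀ x : List A, (proj s x).count a = x.count a := by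
  intro x
  induction x with
  | nil => rfl
  | cons b σ ih =>
    by_cases hb : b ∈ s
    · simp [proj, hb, List.count_cons, ih]
    · have hab : ¬ b = a := fun h => hb (h ▸ ha)
      simp [proj, hb, List.count_cons, ih, hab]

theorem proj_proj {A : Type*} (s t : Set A) (h : s ⊆ t) :
    ∀ x : List A, proj s (proj t x) = proj s x := by
  intro x
  induction x with
  | nil => rfl
  | cons b σ ih =>
    by_cases hb : b ∈ t
    · by_cases hbs : b ∈ s <;> simp [proj, hb, hbs, ih]
    · have hbs : b ∉ s := fun hbs => hb (h hbs)
      simp [proj, hb, hbs, ih]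

/-- Augmenting the distribution with one chosen discrepancy per counter-example in
a nonempty set `S ⊆ CED(Ω,Obs)` yields a strictly more connecting distribution in
which no counter-example of `S` remains: no trace of a counter-example's positive
image matches the negative trace on the added discrepancy. -/
theorem augment_with_discrepancies {A : Type*} [DecidableEq A]
    (Ω : Set (Set A)) (hΩ : TraceDistribution Ω) (Obs : List A → Option Bool)
    (S : Set (List A × (Set A → List A)))
    (hS : ∀ ce ∈ S, IsCED Ω Obs ce.1 ce.2) (hSne : S.Nonempty)
    (δ : List A × (Set A → List A) → Set A)
    (hδ : ∀ ce ∈ S, IsDisc Ω ce.1 ce.2 (δ ce)) :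
    lessConn Ω (Ω ∪ δ '' S) ∧ ¬ lessConn (Ω ∪ δ '' S) Ω ∧
      ∀ ce ∈ S, ∀ s ∈ Ω, proj (δ ce) ce.1 ≠ proj (δ ce) (ce.2 s) := by
  have key : ∀ ce ∈ S, ∀ s ∈ Ω, proj (δ ce) ce.1 ≠ proj (δ ce) (ce.2 s) := by
    intro ce hce s hs heq
    rcases hδ ce hce s hs with ⟨a, haδ, hmd⟩ | ⟨a, b, haδ, hbδ, _, hca, hcb, hne⟩
    · apply hmd
      rw [← count_proj (δ ce) a haδ ce.1, heq, count_proj (δ ce) a haδ]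
    · apply hne
      have hsub : ({a, b} : Set A) ⊆ δ ce := by
        intro x hx; rcases hx with rfl | rfl <;> assumption
      rw [← proj_proj _ _ hsub ce.1, heq, proj_proj _ _ hsub]
  refine ⟨fun s hs => ⟨s, Or.inl hs, subset_rfl⟩, ?_, key⟩
  intro hlc
  obtain ⟨ce, hce⟩ := hSne
  obtain ⟨t, ht, hsub⟩ := hlc (δ ce) (Or.inr ⟨ce, hce, rfl⟩)
  have hproj := (hS ce hce).2 t ht
  exact key ce hce t ht
    (by rw [← proj_proj _ _ hsub ce.1, hproj.2, proj_proj _ _ hsub])
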